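/- Let n ≥ 1 and let F : ℝ^{4n} → ℝ be smooth and everywhere positive. Set u = F² and f = −2 ln F (so u = e^{−f}). Then for every x ∈ ℝ^{4n}: u(x)·P_f(x)(∇f(x)) = 4·P_F(x)(∇F(x)) + [ −(1/4)|∇f(x)|⁴ + (1/2)|∇f(x)|²·Δf(x) + D²f(x)[∇f(x), ∇f(x)] ]·u(x). -/

import Mathlib

open scoped RealInnerProductSpace

noncomputable section

/-- `ℝ^{4n}` identified with `ℍⁿ`: the `4n` real coordinates are indexed by pairs
`(a, t)` where `a` numbers the quaternionic component and `t ∈ {0,1,2,3}` the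
real coordinates `1, i, j, k` of that quaternion. -/
abbrev Qn (n : ℕ) := EuclideanSpace ℝ (Fin n × Fin 4)

/-- The three almost complex structures `I₁, I₂, I₃` on `ℝ^{4n} = ℍⁿ`, given by
componentwise left multiplication by the quaternion units `i, j, k`. -/
def Iop (n : ℕ) (s : Fin 3) (x : Qn n) : Qn n := WithLp.toLp 2 fun (p : Fin n × Fin 4) =>
  ![ ![ -x (p.1, 1),  x (p.1, 0), -x (p.1, 3),  x (p.1, 2) ],
     ![ -x (p.1, 2),  x (p.1, 3),  x (p.1, 0), -x (p.1, 1) ],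
     ![ -x (p.1, 3), -x (p.1, 2),  x (p.1, 1),  x (p.1, 0) ] ] s p.2

/-- The standard orthonormal basis of `ℝ^{4n}`. -/
def eQ (n : ℕ) (p : Fin n × Fin 4) : Qn n := EuclideanSpace.single p 1

/-- Second Fréchet derivative as a bilinear form. -/
def D2Q (n : ℕ) (g : Qn n → ℝ) (x X Y : Qn n) : ℝ := iteratedFDeriv ℝ 2 g x ![X, Y]

/-- Third Fréchet derivative as a trilinear form. -/
def D3Q (n : ℕ) (g : Qn n → ℝ) (x Z X Y : Qn n) : ℝ := iteratedFDeriv ℝ 3 g x ![Z, X, Y]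

/-- The Laplacian `Δg(x) = Σ_a D²g(x)[e_a, e_a]`. -/
def lapQ (n : ℕ) (g : Qn n → ℝ) (x : Qn n) : ℝ := ∑ p, D2Q n g x (eQ n p) (eQ n p)

/-- The flat quaternionic P-form
`P_g(x)(Z) = Σ_b D³g(x)[Z,e_b,e_b] + Σ_{s=1}^3 Σ_b D³g(x)[I_s Z, e_b, I_s e_b]`. -/
def PQ (n : ℕ) (g : Qn n → ℝ) (x Z : Qn n) : ℝ :=
  (∑ b, D3Q n g x Z (eQ n b) (eQ n b)) +
    ∑ s : Fin 3, ∑ b, D3Q n g x (Iop n s Z) (eQ n b) (Iop n s (eQ n b))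

/-! ### Auxiliary lemmas -/

section Aux

lemma qcaux_topcast : ((⊤:ℕ∞) : WithTop ℕ∞) + 1 ≤ ((⊤:ℕ∞) : WithTop ℕ∞) := by
  exact_mod_cast le_top

lemma qcaux_topcast1 : ((⊤:ℕ∞) : WithTop ℕ∞) ≠ 0 := by exact_mod_cast (by simp : (⊤:ℕ∞) ≠ 0)

lemma D2Q_eq {n : ℕ} (g : Qn n → ℝ) (x X Y : Qn n) :
    D2Q n g x X Y = fderiv ℝ (fderiv ℝ g) x X Y := by
  rw [D2Q, iteratedFDeriv_two_apply]; simp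

lemma D3Q_eq {n : ℕ} (g : Qn n → ℝ) (x Z X Y : Qn n) :
    D3Q n g x Z X Y = fderiv ℝ (fderiv ℝ (fderiv ℝ g)) x Z X Y := by
  rw [D3Q, iteratedFDeriv_succ_apply_right, iteratedFDeriv_two_apply]
  simp [Fin.init, Fin.last]

lemma fderiv_eval {n : ℕ} {E : Type*} [NormedAddCommGroup E] [NormedSpace ℝ E]
    (h : Qn n → (Qn n →L[ℝ] E)) {x : Qn n} (hh : DifferentiableAt ℝ h x) (X Y : Qn n) :
    fderiv ℝ (fun y => h y Y) x X = fderiv ℝ h x X Y := by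
  have h2 := hh.hasFDerivAt.clm_apply (hasFDerivAt_const Y x)
  rw [h2.fderiv]; simp

lemma fderiv_eval2 {n : ℕ} (h : Qn n → (Qn n →L[ℝ] (Qn n →L[ℝ] ℝ))) {x : Qn n}
    (hh : DifferentiableAt ℝ h x) (Z X Y : Qn n) :
    fderiv ℝ (fun y => h y X Y) x Z = fderiv ℝ h x Z X Y := by
  have hx : DifferentiableAt ℝ (fun y => h y X) x := hh.clm_apply (differentiableAt_const X)
  rw [fderiv_eval (fun y => h y X) hx Z Y, fderiv_eval h hh Z X]

lemma sum_eval {n : ℕ} (L : Qn n →L[ℝ] ℝ) (w : Qn n) :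
    (∑ p, L (eQ n p) * ⟪w, eQ n p⟫) = L w := by
  have hw := (EuclideanSpace.basisFun (Fin n × Fin 4) ℝ).sum_repr' w
  conv_rhs => rw [← hw]
  rw [map_sum]
  refine Finset.sum_congr rfl fun p _ => ?_
  rw [map_smul]
  simp [eQ, EuclideanSpace.basisFun_apply, real_inner_comm, smul_eq_mul, mul_comm]

def IopL (n : ℕ) (s : Fin 3) : Qn n →L[ℝ] Qn n :=
  LinearMap.toContinuousLinearMap
    { toFun := Iop n s
      map_add' := by
        intro x y; ext p; obtain ⟨a, t⟩ := p
        fin_cases s <;> fin_cases t <;> simp [Iop, PiLp.add_apply] <;> try ring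
      map_smul' := by
        intro c x; ext p; obtain ⟨a, t⟩ := p
        fin_cases s <;> fin_cases t <;> simp [Iop, PiLp.smul_apply, smul_eq_mul] }

lemma IopL_apply {n : ℕ} (s : Fin 3) (v : Qn n) : IopL n s v = Iop n s v := rfl

lemma Iop_smul {n : ℕ} (s : Fin 3) (c : ℝ) (v : Qn n) :
    Iop n s (c • v) = c • Iop n s v := by
  rw [← IopL_apply, ← IopL_apply, map_smul]

lemma inner_Iop {n : ℕ} (s : Fin 3) (v w : Qn n) :
    ⟪v, Iop n s w⟫ = -⟪Iop n s v, w⟫ := by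
  simp only [PiLp.inner_apply, RCLike.inner_apply, conj_trivial]
  rw [← Finset.sum_neg_distrib]
  rw [Fintype.sum_prod_type, Fintype.sum_prod_type]
  refine Finset.sum_congr rfl fun a _ => ?_
  fin_cases s <;> simp [Iop, Fin.sum_univ_four] <;> ring

lemma D3Q_smul {n : ℕ} (g : Qn n → ℝ) (x : Qn n) (c : ℝ) (Z X Y : Qn n) :
    D3Q n g x (c • Z) X Y = c * D3Q n g x Z X Y := by
  simp [D3Q_eq, map_smul]

lemma PQ_smul {n : ℕ} (g : Qn n → ℝ) (x : Qn n) (c : ℝ) (Z : Qn n) :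
    PQ n g x (c • Z) = c * PQ n g x Z := by
  simp only [PQ, Iop_smul, D3Q_smul, Finset.mul_sum, mul_add]

end Aux

section Chain

variable {n : ℕ} {F : Qn n → ℝ}

lemma hasF1 (hF : ContDiff ℝ (⊤ : ℕ∞) F) (hFpos : ∀ x, 0 < F x) (x : Qn n) :
    HasFDerivAt (fun y => -2 * Real.log (F y)) ((-2 * (F x)⁻¹) • fderiv ℝ F x) x := by
  have hd := (hF.differentiable qcaux_topcast1 x).hasFDerivAt
  have hlog := (Real.hasDerivAt_log (hFpos x).ne').comp_hasFDerivAt x hd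
  have := hlog.const_mul (-2)
  simpa [Function.comp_def, smul_smul, mul_comm] using this

lemma fderiv_f_eq (hF : ContDiff ℝ (⊤ : ℕ∞) F) (hFpos : ∀ x, 0 < F x) (x : Qn n) :
    fderiv ℝ (fun y => -2 * Real.log (F y)) x = (-2 * (F x)⁻¹) • fderiv ℝ F x :=
  (hasF1 hF hFpos x).fderiv

lemma hasAY (hF : ContDiff ℝ (⊤ : ℕ∞) F) (x Y : Qn n) :
    HasFDerivAt (fun y => fderiv ℝ F y Y) ((fderiv ℝ (fderiv ℝ F) x).flip Y) x := by
  have hA : DifferentiableAt ℝ (fderiv ℝ F) x :=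
    ((hF.fderiv_right qcaux_topcast).differentiable qcaux_topcast1) x
  have := hA.hasFDerivAt.clm_apply (hasFDerivAt_const Y x)
  simpa using this

lemma hasInv (hF : ContDiff ℝ (⊤ : ℕ∞) F) (hFpos : ∀ x, 0 < F x) (x : Qn n) :
    HasFDerivAt (fun y => (F y)⁻¹) ((-((F x) ^ 2)⁻¹) • fderiv ℝ F x) x := by
  have hd := (hF.differentiable qcaux_topcast1 x).hasFDerivAt
  have := (hasDerivAt_inv (hFpos x).ne').comp_hasFDerivAt x hd
  simpa [Function.comp_def] using this

lemma fderiv2_f (hF : ContDiff ℝ (⊤ : ℕ∞) F) (hFpos : ∀ x, 0 < F x) (x X Y : Qn n) :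
    fderiv ℝ (fderiv ℝ (fun y => -2 * Real.log (F y))) x X Y =
      -2 * (F x)⁻¹ * fderiv ℝ (fderiv ℝ F) x X Y
        + 2 * ((F x) ^ 2)⁻¹ * (fderiv ℝ F x X * fderiv ℝ F x Y) := by
  have hfd : ContDiff ℝ (⊤ : ℕ∞) (fun y => -2 * Real.log (F y)) :=
    contDiff_const.mul (hF.log fun z => (hFpos z).ne')
  have hdiff : DifferentiableAt ℝ (fderiv ℝ (fun y => -2 * Real.log (F y))) x :=
    ((hfd.fderiv_right qcaux_topcast).differentiable qcaux_topcast1) x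
  rw [← fderiv_eval _ hdiff X Y]
  have heq : (fun y => fderiv ℝ (fun z => -2 * Real.log (F z)) y Y)
      = fun y => (-2 * (F y)⁻¹) * fderiv ℝ F y Y := by
    funext y; rw [fderiv_f_eq hF hFpos]; simp
  rw [heq]
  have h1 : HasFDerivAt (fun y => -2 * (F y)⁻¹)
      (((-2:ℝ)) • (-((F x) ^ 2)⁻¹) • fderiv ℝ F x) x := (hasInv hF hFpos x).const_mul (-2)
  have hm := h1.mul (hasAY hF x Y)
  rw [(show HasFDerivAt (fun y => -2 * (F y)⁻¹ * fderiv ℝ F y Y) _ x from hm).fderiv]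
  simp only [ContinuousLinearMap.add_apply, ContinuousLinearMap.smul_apply,
    ContinuousLinearMap.flip_apply, smul_eq_mul]
  ring

lemma hasInv2 (hF : ContDiff ℝ (⊤ : ℕ∞) F) (hFpos : ∀ x, 0 < F x) (x : Qn n) :
    HasFDerivAt (fun y => ((F y) ^ 2)⁻¹)
      ((-((F x ^ 2) ^ 2)⁻¹) • ((2 * F x ^ 1) • fderiv ℝ F x)) x := by
  have hd := (hF.differentiable qcaux_topcast1 x).hasFDerivAt
  have hsq : HasFDerivAt (fun y => (F y) ^ 2) ((2 * F x ^ 1) • fderiv ℝ F x) x := by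
    have := (hasDerivAt_pow 2 (F x)).comp_hasFDerivAt x hd
    simpa [Function.comp_def] using this
  have := (hasDerivAt_inv (pow_ne_zero 2 (hFpos x).ne')).comp_hasFDerivAt x hsq
  simpa [Function.comp_def] using this

lemma fderiv3_f (hF : ContDiff ℝ (⊤ : ℕ∞) F) (hFpos : ∀ x, 0 < F x) (x Z X Y : Qn n) :
    fderiv ℝ (fderiv ℝ (fderiv ℝ (fun y => -2 * Real.log (F y)))) x Z X Y =
      -2 * (F x)⁻¹ * fderiv ℝ (fderiv ℝ (fderiv ℝ F)) x Z X Y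
        + 2 * ((F x) ^ 2)⁻¹ *
            (fderiv ℝ F x Z * fderiv ℝ (fderiv ℝ F) x X Y
              + fderiv ℝ F x Y * fderiv ℝ (fderiv ℝ F) x Z X
              + fderiv ℝ F x X * fderiv ℝ (fderiv ℝ F) x Z Y)
        - 4 * ((F x) ^ 3)⁻¹ * (fderiv ℝ F x Z * fderiv ℝ F x X * fderiv ℝ F x Y) := by
  have hfd : ContDiff ℝ (⊤ : ℕ∞) (fun y => -2 * Real.log (F y)) :=
    contDiff_const.mul (hF.log fun z => (hFpos z).ne')
  have hdiff2 : DifferentiableAt ℝ (fderiv ℝ (fderiv ℝ (fun y => -2 * Real.log (F y)))) x :=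
    (((hfd.fderiv_right qcaux_topcast).fderiv_right qcaux_topcast).differentiable
      qcaux_topcast1) x
  rw [← fderiv_eval2 _ hdiff2 Z X Y]
  have heq : (fun y => fderiv ℝ (fderiv ℝ (fun z => -2 * Real.log (F z))) y X Y)
      = fun y => (-2 * (F y)⁻¹) * fderiv ℝ (fderiv ℝ F) y X Y
          + (2 * ((F y) ^ 2)⁻¹) * (fderiv ℝ F y X * fderiv ℝ F y Y) := by
    funext y; rw [fderiv2_f hF hFpos]
  rw [heq]
  have hBdiff : DifferentiableAt ℝ (fderiv ℝ (fderiv ℝ F)) x :=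
    (((hF.fderiv_right qcaux_topcast).fderiv_right qcaux_topcast).differentiable
      qcaux_topcast1) x
  have k2 := (hBdiff.hasFDerivAt.clm_apply (hasFDerivAt_const X x)).clm_apply
    (hasFDerivAt_const Y x)
  have h1 : HasFDerivAt (fun y => -2 * (F y)⁻¹)
      (((-2:ℝ)) • (-((F x) ^ 2)⁻¹) • fderiv ℝ F x) x := (hasInv hF hFpos x).const_mul (-2)
  have h2 : HasFDerivAt (fun y => 2 * ((F y) ^ 2)⁻¹)
      (((2:ℝ)) • (-((F x ^ 2) ^ 2)⁻¹) • ((2 * F x ^ 1) • fderiv ℝ F x)) x :=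
    (hasInv2 hF hFpos x).const_mul (2:ℝ)
  have hadd := (h1.mul k2).add (h2.mul ((hasAY hF x X).mul (hasAY hF x Y)))
  rw [(show HasFDerivAt (fun y => -2 * (F y)⁻¹ * fderiv ℝ (fderiv ℝ F) y X Y
      + 2 * ((F y) ^ 2)⁻¹ * (fderiv ℝ F y X * fderiv ℝ F y Y)) _ x from hadd).fderiv]
  have hne := (hFpos x).ne'
  simp only [ContinuousLinearMap.add_apply, ContinuousLinearMap.smul_apply,
    ContinuousLinearMap.flip_apply, ContinuousLinearMap.comp_apply,
    ContinuousLinearMap.zero_apply, ContinuousLinearMap.comp_zero,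
    ContinuousLinearMap.zero_comp, ContinuousLinearMap.coe_comp', Function.comp_apply,
    smul_eq_mul, pow_one, Pi.mul_apply]
  field_simp
  ring

end Chain

set_option maxHeartbeats 2000000 in
/-- `u·P_f(∇f) = 4 P_F(∇F) + [ −¼|∇f|⁴ + ½|∇f|²Δf + ∇²f(∇f,∇f) ]·u`
where `u = F²`, `f = −2 ln F`. -/
theorem qc_P_change_of_variable (n : ℕ) (hn : 1 ≤ n) (F : Qn n → ℝ)
    (hF : ContDiff ℝ (⊤ : ℕ∞) F) (hFpos : ∀ x, 0 < F x)
    (u f : Qn n → ℝ) (hu : u = fun x => (F x) ^ 2)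
    (hf : f = fun x => -2 * Real.log (F x)) (x : Qn n) :
    u x * PQ n f x (gradient f x) =
      4 * PQ n F x (gradient F x)
      + (-(1 / 4) * ‖gradient f x‖ ^ 4 + (1 / 2) * ‖gradient f x‖ ^ 2 * lapQ n f x
          + D2Q n f x (gradient f x) (gradient f x)) * u x := by
  subst hu hf
  have hne : F x ≠ 0 := (hFpos x).ne'
  -- gradient facts
  have hgrad : ∀ v : Qn n, fderiv ℝ F x v = ⟪gradient F x, v⟫ := by
    intro v
    unfold gradient
    rw [InnerProductSpace.toDual_symm_apply]
  have hgf : gradient (fun y => -2 * Real.log (F y)) x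
      = (-2 * (F x)⁻¹) • gradient F x := by
    unfold gradient
    rw [fderiv_f_eq hF hFpos x, map_smul]
  -- the key orthonormal-basis summation identity
  have key : ∀ L : Qn n →L[ℝ] ℝ,
      (∑ b, L (eQ n b) * fderiv ℝ F x (eQ n b)) = L (gradient F x) := by
    intro L
    simp_rw [hgrad]
    exact sum_eval L _
  have keyI : ∀ (s : Fin 3) (L : Qn n →L[ℝ] ℝ),
      (∑ b, L (eQ n b) * ⟪Iop n s (gradient F x), eQ n b⟫) = L (Iop n s (gradient F x)) :=
    fun s L => sum_eval L _
  -- skew facts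
  have hW0 : ∀ s : Fin 3, fderiv ℝ F x (Iop n s (gradient F x)) = 0 := by
    intro s
    have h := inner_Iop s (gradient F x) (gradient F x)
    have h2 := real_inner_comm (gradient F x) (Iop n s (gradient F x))
    have : ⟪gradient F x, Iop n s (gradient F x)⟫ = 0 := by linarith
    rw [hgrad, this]
  have hA1 : ∀ (s : Fin 3) (b : Fin n × Fin 4),
      fderiv ℝ F x (Iop n s (eQ n b)) = -⟪Iop n s (gradient F x), eQ n b⟫ := by
    intro s b
    rw [hgrad, inner_Iop]
  -- derivative formulas for f
  have hD3f : ∀ Z X Y : Qn n,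
      D3Q n (fun y => -2 * Real.log (F y)) x Z X Y =
        -2 * (F x)⁻¹ * fderiv ℝ (fderiv ℝ (fderiv ℝ F)) x Z X Y
          + 2 * ((F x) ^ 2)⁻¹ *
              (fderiv ℝ F x Z * fderiv ℝ (fderiv ℝ F) x X Y
                + fderiv ℝ F x Y * fderiv ℝ (fderiv ℝ F) x Z X
                + fderiv ℝ F x X * fderiv ℝ (fderiv ℝ F) x Z Y)
          - 4 * ((F x) ^ 3)⁻¹ * (fderiv ℝ F x Z * fderiv ℝ F x X * fderiv ℝ F x Y) := by
    intro Z X Y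
    rw [D3Q_eq]
    exact fderiv3_f hF hFpos x Z X Y
  have hD2f : ∀ X Y : Qn n,
      D2Q n (fun y => -2 * Real.log (F y)) x X Y =
        -2 * (F x)⁻¹ * fderiv ℝ (fderiv ℝ F) x X Y
          + 2 * ((F x) ^ 2)⁻¹ * (fderiv ℝ F x X * fderiv ℝ F x Y) := by
    intro X Y
    rw [D2Q_eq]
    exact fderiv2_f hF hFpos x X Y
  -- scalar abbreviations (as plain equalities)
  -- r := fderiv F x (∇F), q := B(∇F,∇F), m := tr B, TS, TT
  -- straight sum
  have hstraight : (∑ b, D3Q n (fun y => -2 * Real.log (F y)) x (gradient F x)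
        (eQ n b) (eQ n b)) =
      -2 * (F x)⁻¹ *
          (∑ b, fderiv ℝ (fderiv ℝ (fderiv ℝ F)) x (gradient F x) (eQ n b) (eQ n b))
        + 2 * ((F x) ^ 2)⁻¹ * (fderiv ℝ F x (gradient F x) *
            (∑ b, fderiv ℝ (fderiv ℝ F) x (eQ n b) (eQ n b))
          + 2 * fderiv ℝ (fderiv ℝ F) x (gradient F x) (gradient F x))
        - 4 * ((F x) ^ 3)⁻¹ *
            (fderiv ℝ F x (gradient F x) * fderiv ℝ F x (gradient F x)) := by
    have step1 : (∑ b, D3Q n (fun y => -2 * Real.log (F y)) x (gradient F x)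
          (eQ n b) (eQ n b)) =
        ∑ b, ((-2 * (F x)⁻¹) *
              fderiv ℝ (fderiv ℝ (fderiv ℝ F)) x (gradient F x) (eQ n b) (eQ n b)
            + (2 * ((F x) ^ 2)⁻¹ * fderiv ℝ F x (gradient F x)) *
              fderiv ℝ (fderiv ℝ F) x (eQ n b) (eQ n b)
            + (4 * ((F x) ^ 2)⁻¹) *
              (fderiv ℝ (fderiv ℝ F) x (gradient F x) (eQ n b) * fderiv ℝ F x (eQ n b))
            - (4 * ((F x) ^ 3)⁻¹ * fderiv ℝ F x (gradient F x)) *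
              (fderiv ℝ F x (eQ n b) * fderiv ℝ F x (eQ n b))) :=
      Finset.sum_congr rfl fun b _ => by rw [hD3f]; ring
    rw [step1]
    rw [Finset.sum_sub_distrib, Finset.sum_add_distrib, Finset.sum_add_distrib,
      ← Finset.mul_sum, ← Finset.mul_sum, ← Finset.mul_sum, ← Finset.mul_sum]
    rw [key (fderiv ℝ (fderiv ℝ F) x (gradient F x)), key (fderiv ℝ F x)]
    ring
  -- twisted sums
  have htw : ∀ s : Fin 3,
      (∑ b, D3Q n (fun y => -2 * Real.log (F y)) x (Iop n s (gradient F x))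
          (eQ n b) (Iop n s (eQ n b))) =
        -2 * (F x)⁻¹ * (∑ b, fderiv ℝ (fderiv ℝ (fderiv ℝ F)) x
            (Iop n s (gradient F x)) (eQ n b) (Iop n s (eQ n b))) := by
    intro s
    have hz : (∑ b, (fderiv ℝ F x (Iop n s (eQ n b)) *
          fderiv ℝ (fderiv ℝ F) x (Iop n s (gradient F x)) (eQ n b)
        + fderiv ℝ F x (eQ n b) *
          fderiv ℝ (fderiv ℝ F) x (Iop n s (gradient F x)) (Iop n s (eQ n b)))) = 0 := by
      have step : ∀ b : Fin n × Fin 4,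
          (fderiv ℝ F x (Iop n s (eQ n b)) *
              fderiv ℝ (fderiv ℝ F) x (Iop n s (gradient F x)) (eQ n b)
            + fderiv ℝ F x (eQ n b) *
              fderiv ℝ (fderiv ℝ F) x (Iop n s (gradient F x)) (Iop n s (eQ n b)))
          = -((fderiv ℝ (fderiv ℝ F) x (Iop n s (gradient F x))) (eQ n b) *
                ⟪Iop n s (gradient F x), eQ n b⟫)
            + ((fderiv ℝ (fderiv ℝ F) x (Iop n s (gradient F x))).comp (IopL n s)) (eQ n b) *
                fderiv ℝ F x (eQ n b) := by
        intro b
        rw [hA1 s b]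
        simp only [ContinuousLinearMap.comp_apply, IopL_apply]
        ring
      rw [Finset.sum_congr rfl fun b _ => step b, Finset.sum_add_distrib,
        Finset.sum_neg_distrib, keyI s, key]
      simp only [ContinuousLinearMap.comp_apply, IopL_apply]
      ring
    have step1 : (∑ b, D3Q n (fun y => -2 * Real.log (F y)) x (Iop n s (gradient F x))
          (eQ n b) (Iop n s (eQ n b))) =
        ∑ b, ((-2 * (F x)⁻¹) * fderiv ℝ (fderiv ℝ (fderiv ℝ F)) x
              (Iop n s (gradient F x)) (eQ n b) (Iop n s (eQ n b))
          + (2 * ((F x) ^ 2)⁻¹) * (fderiv ℝ F x (Iop n s (eQ n b)) *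
                fderiv ℝ (fderiv ℝ F) x (Iop n s (gradient F x)) (eQ n b)
              + fderiv ℝ F x (eQ n b) *
                fderiv ℝ (fderiv ℝ F) x (Iop n s (gradient F x)) (Iop n s (eQ n b)))) :=
      Finset.sum_congr rfl fun b _ => by rw [hD3f, hW0 s]; ring
    rw [step1, Finset.sum_add_distrib, ← Finset.mul_sum, ← Finset.mul_sum, hz]
    ring
  -- assemble the P-forms
  have hPQf : PQ n (fun y => -2 * Real.log (F y)) x
        (gradient (fun y => -2 * Real.log (F y)) x)
      = (-2 * (F x)⁻¹) * ((
          -2 * (F x)⁻¹ *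
              (∑ b, fderiv ℝ (fderiv ℝ (fderiv ℝ F)) x (gradient F x) (eQ n b) (eQ n b))
            + 2 * ((F x) ^ 2)⁻¹ * (fderiv ℝ F x (gradient F x) *
                (∑ b, fderiv ℝ (fderiv ℝ F) x (eQ n b) (eQ n b))
              + 2 * fderiv ℝ (fderiv ℝ F) x (gradient F x) (gradient F x))
            - 4 * ((F x) ^ 3)⁻¹ *
                (fderiv ℝ F x (gradient F x) * fderiv ℝ F x (gradient F x)))
        + (-2 * (F x)⁻¹) * (∑ s : Fin 3, ∑ b, fderiv ℝ (fderiv ℝ (fderiv ℝ F)) x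
            (Iop n s (gradient F x)) (eQ n b) (Iop n s (eQ n b)))) := by
    rw [hgf, PQ_smul]
    congr 1
    rw [PQ, hstraight]
    congr 1
    rw [Finset.sum_congr rfl fun s _ => htw s, ← Finset.mul_sum]
  have hPQF : PQ n F x (gradient F x)
      = (∑ b, fderiv ℝ (fderiv ℝ (fderiv ℝ F)) x (gradient F x) (eQ n b) (eQ n b))
        + ∑ s : Fin 3, ∑ b, fderiv ℝ (fderiv ℝ (fderiv ℝ F)) x
            (Iop n s (gradient F x)) (eQ n b) (Iop n s (eQ n b)) := by
    rw [PQ]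
    simp only [D3Q_eq]
  -- Laplacian of f
  have hlap : lapQ n (fun y => -2 * Real.log (F y)) x
      = -2 * (F x)⁻¹ * (∑ b, fderiv ℝ (fderiv ℝ F) x (eQ n b) (eQ n b))
        + 2 * ((F x) ^ 2)⁻¹ * fderiv ℝ F x (gradient F x) := by
    rw [lapQ]
    have step1 : (∑ b, D2Q n (fun y => -2 * Real.log (F y)) x (eQ n b) (eQ n b)) =
        ∑ b, ((-2 * (F x)⁻¹) * fderiv ℝ (fderiv ℝ F) x (eQ n b) (eQ n b)
          + (2 * ((F x) ^ 2)⁻¹) * (fderiv ℝ F x (eQ n b) * fderiv ℝ F x (eQ n b))) :=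
      Finset.sum_congr rfl fun b _ => by rw [hD2f]
    rw [step1, Finset.sum_add_distrib, ← Finset.mul_sum, ← Finset.mul_sum, key (fderiv ℝ F x)]
  -- Hessian of f at the gradient
  have hhess : D2Q n (fun y => -2 * Real.log (F y)) x
        (gradient (fun y => -2 * Real.log (F y)) x)
        (gradient (fun y => -2 * Real.log (F y)) x)
      = (-2 * (F x)⁻¹) * (-2 * (F x)⁻¹) *
          (-2 * (F x)⁻¹ * fderiv ℝ (fderiv ℝ F) x (gradient F x) (gradient F x)
            + 2 * ((F x) ^ 2)⁻¹ *
              (fderiv ℝ F x (gradient F x) * fderiv ℝ F x (gradient F x))) := by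
    rw [hgf, hD2f]
    simp only [map_smul, ContinuousLinearMap.smul_apply, smul_eq_mul]
    ring
  -- norms
  have hnorm2 : ‖gradient (fun y => -2 * Real.log (F y)) x‖ ^ 2
      = (-2 * (F x)⁻¹) * (-2 * (F x)⁻¹) * fderiv ℝ F x (gradient F x) := by
    rw [hgf, norm_smul, hgrad, real_inner_self_eq_norm_sq, mul_pow, Real.norm_eq_abs, sq_abs]
    ring
  have hnorm4 : ‖gradient (fun y => -2 * Real.log (F y)) x‖ ^ 4
      = (‖gradient (fun y => -2 * Real.log (F y)) x‖ ^ 2) ^ 2 := by ring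
  -- final assembly
  rw [hPQf, hPQF, hnorm4, hnorm2, hlap, hhess]
  field_simp
  ring
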